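/- Let a, m₄, m₅ be real constants and set m₁ := (−3a + 2m₄ − 2m₅)/72, m₂ := (−30a + 17m₄ − 8m₅)/36, m₃ := (15a − 10m₄ + 4m₅)/12. Then the kink-type function u(t,x) := tanh²(x − at) satisfies u_t + m₁ u_{xxxxx} + m₂ u_{xxx} + m₃ u u_{xxx} + m₄ u u_x + m₅ u_x u_{xx} = 0 at every point (t,x). -/

import Mathlib

lemma tanh_hasDerivAt (x : ℝ) : HasDerivAt Real.tanh (1 - Real.tanh x ^ 2) x := by
  have hc : Real.cosh x ≠ 0 := (Real.cosh_pos x).ne'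
  have h := (Real.hasDerivAt_sinh x).div (Real.hasDerivAt_cosh x) hc
  have key : (Real.cosh x * Real.cosh x - Real.sinh x * Real.sinh x) / Real.cosh x ^ 2
      = 1 - Real.tanh x ^ 2 := by
    rw [Real.tanh_eq_sinh_div_cosh]
    have := Real.cosh_sq_sub_sinh_sq x
    field_simp
  have heq : (Real.sinh / Real.cosh) = Real.tanh := by
    funext y; rw [Pi.div_apply, Real.tanh_eq_sinh_div_cosh]
  rw [heq, key] at h
  exact h



/-- Partial derivative of `u(t,x)` with respect to `t`. -/
noncomputable def pdt (u : ℝ × ℝ → ℝ) (t x : ℝ) : ℝ :=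
  deriv (fun s => u (s, x)) t

/-- `n`-th partial derivative of `u(t,x)` with respect to `x`. -/
noncomputable def pdx (n : ℕ) (u : ℝ × ℝ → ℝ) (t x : ℝ) : ℝ :=
  iteratedDeriv n (fun y => u (t, y)) x

/-- The kink-type solution `u = tanh²(x − at)` of the constant-coefficient
fifth-order KdV equation (17). -/
theorem kink_solution
    (a m₄ m₅ : ℝ)
    (m₁ m₂ m₃ : ℝ)
    (hm₁ : m₁ = (-3 * a + 2 * m₄ - 2 * m₅) / 72)
    (hm₂ : m₂ = (-30 * a + 17 * m₄ - 8 * m₅) / 36)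
    (hm₃ : m₃ = (15 * a - 10 * m₄ + 4 * m₅) / 12)
    (u : ℝ × ℝ → ℝ)
    (hu : ∀ p : ℝ × ℝ, u p = Real.tanh (p.2 - a * p.1) ^ 2) :
    ∀ t x,
      pdt u t x + m₁ * pdx 5 u t x + m₂ * pdx 3 u t x
        + m₃ * u (t, x) * pdx 3 u t x + m₄ * u (t, x) * pdx 1 u t x
        + m₅ * pdx 1 u t x * pdx 2 u t x = 0 := by
  intro t x
  set T : ℝ → ℝ := fun y => Real.tanh (y - a * t) with hTdef
  have hfun : (fun y => u (t, y)) = fun y => T y ^ 2 := funext fun y => hu (t, y)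
  have hT : ∀ y, HasDerivAt T (1 - T y ^ 2) y := fun y => by
    have h := (tanh_hasDerivAt (y - a * t)).comp y ((hasDerivAt_id y).sub_const (a * t))
    rw [mul_one] at h
    exact h
  have h1 : ∀ y, HasDerivAt (fun z => T z ^ 2) (2 * T y - 2 * T y ^ 3) y := fun y => by
    have h := (hT y).pow 2
    refine h.congr_deriv ?_
    push_cast; ring
  have h2 : ∀ y, HasDerivAt (fun z => 2 * T z - 2 * T z ^ 3)
      (2 - 8 * T y ^ 2 + 6 * T y ^ 4) y := fun y => by
    have h := ((hT y).const_mul 2).sub (((hT y).pow 3).const_mul 2)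
    refine h.congr_deriv ?_
    push_cast; ring
  have h3 : ∀ y, HasDerivAt (fun z => 2 - 8 * T z ^ 2 + 6 * T z ^ 4)
      (-16 * T y + 40 * T y ^ 3 - 24 * T y ^ 5) y := fun y => by
    have h := ((hasDerivAt_const y (2:ℝ)).sub (((hT y).pow 2).const_mul 8)).add
      (((hT y).pow 4).const_mul 6)
    refine h.congr_deriv ?_
    push_cast; ring
  have h4 : ∀ y, HasDerivAt (fun z => -16 * T z + 40 * T z ^ 3 - 24 * T z ^ 5)
      (-16 + 136 * T y ^ 2 - 240 * T y ^ 4 + 120 * T y ^ 6) y := fun y => by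
    have h := (((hT y).const_mul (-16)).add (((hT y).pow 3).const_mul 40)).sub
      (((hT y).pow 5).const_mul 24)
    refine h.congr_deriv ?_
    push_cast; ring
  have h5 : ∀ y, HasDerivAt
      (fun z => -16 + 136 * T z ^ 2 - 240 * T z ^ 4 + 120 * T z ^ 6)
      ((272 * T y - 960 * T y ^ 3 + 720 * T y ^ 5) * (1 - T y ^ 2)) y := fun y => by
    have h := (((hasDerivAt_const y (-16:ℝ)).add (((hT y).pow 2).const_mul 136)).sub
      (((hT y).pow 4).const_mul 240)).add (((hT y).pow 6).const_mul 120)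
    refine h.congr_deriv ?_
    push_cast; ring
  have e1 : iteratedDeriv 1 (fun y => u (t, y)) = fun y => 2 * T y - 2 * T y ^ 3 := by
    rw [iteratedDeriv_one, hfun]; funext y; exact (h1 y).deriv
  have e2 : iteratedDeriv 2 (fun y => u (t, y)) = fun y => 2 - 8 * T y ^ 2 + 6 * T y ^ 4 := by
    rw [show (2:ℕ) = 1 + 1 from rfl, iteratedDeriv_succ, e1]
    funext y; exact (h2 y).deriv
  have e3 : iteratedDeriv 3 (fun y => u (t, y))
      = fun y => -16 * T y + 40 * T y ^ 3 - 24 * T y ^ 5 := by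
    rw [show (3:ℕ) = 2 + 1 from rfl, iteratedDeriv_succ, e2]
    funext y; exact (h3 y).deriv
  have e4 : iteratedDeriv 4 (fun y => u (t, y))
      = fun y => -16 + 136 * T y ^ 2 - 240 * T y ^ 4 + 120 * T y ^ 6 := by
    rw [show (4:ℕ) = 3 + 1 from rfl, iteratedDeriv_succ, e3]
    funext y; exact (h4 y).deriv
  have e5 : iteratedDeriv 5 (fun y => u (t, y))
      = fun y => (272 * T y - 960 * T y ^ 3 + 720 * T y ^ 5) * (1 - T y ^ 2) := by
    rw [show (5:ℕ) = 4 + 1 from rfl, iteratedDeriv_succ, e4]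
    funext y; exact (h5 y).deriv
  have ht : pdt u t x = 2 * T x ^ 1 * ((1 - T x ^ 2) * -a) := by
    have hgfun : (fun s => u (s, x)) = fun s => Real.tanh (x - a * s) ^ 2 :=
      funext fun s => hu (s, x)
    have hin : HasDerivAt (fun s => x - a * s) (-a) t := by
      simpa using (HasDerivAt.const_sub x ((hasDerivAt_id t).const_mul a))
    have h := (((tanh_hasDerivAt (x - a * t)).comp t hin).pow 2)
    rw [pdt, hgfun]
    have h' : HasDerivAt (fun s => Real.tanh (x - a * s) ^ 2)
        (2 * T x ^ 1 * ((1 - T x ^ 2) * -a)) t := by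
      refine h.congr_deriv ?_
      rw [hTdef]; simp only [Function.comp_apply]; push_cast; ring
    exact h'.deriv
  have hux : u (t, x) = T x ^ 2 := hu (t, x)
  rw [pdx, pdx, pdx, pdx, e1, e2, e3, e5, ht, hux]
  simp only
  subst hm₁ hm₂ hm₃
  ring
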